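/- Let A be a set and let x, y, z, w ∈ A with x ≠ y and z ≠ w. Then in the lattice Equ(A) of equivalence relations on A, equ(x,y) ⊓ (equ(x,z) ⊔ equ(w,y)) ⊓ (equ(x,w) ⊔ equ(z,y)) equals the bottom element (the identity relation). -/
import Mathlib

/-- The least equivalence relation on `A` identifying `u` and `v`
(its only nonsingleton block is `{u, v}`; it is `⊥` when `u = v`). -/
def equ {A : Type*} (u v : A) : Setoid A := sInf {s : Setoid A | s u v}

lemma equ_le {A : Type*} {u v : A} {s : Setoid A} (h : s u v) : equ u v ≤ s :=
  sInf_le h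

/-- Explicit setoid with nonsingleton blocks `{u,v}` and `{s,t}` (assuming disjointness). -/
def pairS {A : Type*} (u v s t : A) (h1 : u ≠ s) (h2 : u ≠ t) (h3 : v ≠ s) (h4 : v ≠ t) :
    Setoid A where
  r a b := a = b ∨ (a = u ∧ b = v) ∨ (a = v ∧ b = u) ∨ (a = s ∧ b = t) ∨ (a = t ∧ b = s)
  iseqv := by
    constructor
    · intro a; left; rfl
    · rintro a b (rfl | ⟨rfl, rfl⟩ | ⟨rfl, rfl⟩ | ⟨rfl, rfl⟩ | ⟨rfl, rfl⟩) <;> tauto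
    · rintro a b c (h | ⟨ha, hb⟩ | ⟨ha, hb⟩ | ⟨ha, hb⟩ | ⟨ha, hb⟩)
        (h' | ⟨hc, hd⟩ | ⟨hc, hd⟩ | ⟨hc, hd⟩ | ⟨hc, hd⟩) <;> subst_vars <;> tauto

/-- Explicit setoid with single nonsingleton block `{u, v}`. -/
def oneS {A : Type*} (u v : A) : Setoid A where
  r a b := a = b ∨ (a = u ∧ b = v) ∨ (a = v ∧ b = u)
  iseqv := by
    constructor
    · intro a; left; rfl
    · rintro a b (h | ⟨ha, hb⟩ | ⟨ha, hb⟩) <;> subst_vars <;> tauto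
    · rintro a b c (h | ⟨ha, hb⟩ | ⟨ha, hb⟩) (h' | ⟨hc, hd⟩ | ⟨hc, hd⟩) <;>
        subst_vars <;> tauto

lemma sup_equ_le_pairS {A : Type*} {u v s t : A} (h1 : u ≠ s) (h2 : u ≠ t) (h3 : v ≠ s)
    (h4 : v ≠ t) : equ u v ⊔ equ s t ≤ pairS u v s t h1 h2 h3 h4 := by
  apply sup_le
  · exact equ_le (Or.inr (Or.inl ⟨rfl, rfl⟩))
  · exact equ_le (Or.inr (Or.inr (Or.inr (Or.inl ⟨rfl, rfl⟩))))

lemma sup_equ_rel {A : Type*} {u v s t a b : A} (h1 : u ≠ s) (h2 : u ≠ t) (h3 : v ≠ s)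
    (h4 : v ≠ t) (h : (equ u v ⊔ equ s t) a b) :
    a = b ∨ (a = u ∧ b = v) ∨ (a = v ∧ b = u) ∨ (a = s ∧ b = t) ∨ (a = t ∧ b = s) :=
  Setoid.le_def.mp (sup_equ_le_pairS h1 h2 h3 h4) h

/-- If `x ≠ y` and `z ≠ w`, then in the lattice `Equ(A) = Setoid A` of equivalence
relations on `A` we have
`equ x y ⊓ (equ x z ⊔ equ w y) ⊓ (equ x w ⊔ equ z y) = ⊥`,
where `⊥` is the identity relation. -/
theorem equ_triple_meet_eq_bot {A : Type*} (x y z w : A) (hxy : x ≠ y) (hzw : z ≠ w) :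
    equ x y ⊓ (equ x z ⊔ equ w y) ⊓ (equ x w ⊔ equ z y) = ⊥ := by
  refine le_antisymm (Setoid.le_def.mpr ?_) bot_le
  intro a b h
  rw [Setoid.inf_iff_and, Setoid.inf_iff_and] at h
  obtain ⟨⟨h0, h1⟩, h2⟩ := h
  -- h0 : equ x y a b
  have h0' : a = b ∨ (a = x ∧ b = y) ∨ (a = y ∧ b = x) :=
    Setoid.le_def.mp (equ_le (s := oneS x y) (Or.inr (Or.inl ⟨rfl, rfl⟩))) h0
  rcases h0' with rfl | ⟨ha, hb⟩ | ⟨ha, hb⟩ <;> try (replace ha := ha.symm; replace hb := hb.symm; subst ha hb)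
  · exact Setoid.refl' _ _
  · exfalso
    -- h1 : (equ x z ⊔ equ w y) x y, h2 : (equ x w ⊔ equ z y) x y
    have c1 : z = y ∨ x = w := by
      by_contra hc
      push_neg at hc
      have := sup_equ_rel hc.2 hxy hzw hc.1 h1
      tauto
    have c2 : w = y ∨ x = z := by
      by_contra hc
      push_neg at hc
      have := sup_equ_rel hc.2 hxy (Ne.symm hzw) hc.1 h2
      tauto
    rcases c1 with rfl | rfl <;> rcases c2 with rfl | rfl <;> tauto
  · exfalso
    have h1' := Setoid.symm' _ h1
    have h2' := Setoid.symm' _ h2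
    have c1 : z = y ∨ x = w := by
      by_contra hc
      push_neg at hc
      have := sup_equ_rel hc.2 hxy hzw hc.1 h1'
      tauto
    have c2 : w = y ∨ x = z := by
      by_contra hc
      push_neg at hc
      have := sup_equ_rel hc.2 hxy (Ne.symm hzw) hc.1 h2'
      tauto
    rcases c1 with rfl | rfl <;> rcases c2 with rfl | rfl <;> tauto
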